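/- arXiv:0709.1416 — 3 statements merged into one kernel-verified Lean document; each statement's English description precedes it below -/
import Mathlib

section
/- The first moment of the degree distribution RIG(m,n,p) equals (n-1)(1 - (1-p²)^m); i.e., the derivative at z = 1 of g(z) = ∑_{j=0}^{n-1} C(n-1,j) z^j (1-z)^{n-1-j} [1 - p + p(1-p)^{n-1-j}]^m equals (n-1)(1 - (1-p²)^m). -/
open Finset

theorem rig_first_moment (m n : ℕ) (hn : 1 ≤ n) (p : ℝ) (hp0 : 0 ≤ p) (hp1 : p ≤ 1) :
    HasDerivAt
      (fun z : ℝ => ∑ j ∈ Finset.range n,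
        (Nat.choose (n - 1) j : ℝ) * z ^ j * (1 - z) ^ (n - 1 - j) *
          (1 - p + p * (1 - p) ^ (n - 1 - j)) ^ m)
      ((n - 1 : ℝ) * (1 - (1 - p ^ 2) ^ m)) 1 := by
  set D : ℕ → ℝ := fun j =>
    (Nat.choose (n - 1) j : ℝ) *
      ((j : ℝ) * (0 : ℝ) ^ (n - 1 - j) -
        ((n - 1 - j : ℕ) : ℝ) * (0 : ℝ) ^ (n - 1 - j - 1)) *
      (1 - p + p * (1 - p) ^ (n - 1 - j)) ^ m with hD
  have key : ∀ j ∈ Finset.range n, HasDerivAt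
      (fun z : ℝ => (Nat.choose (n - 1) j : ℝ) * z ^ j * (1 - z) ^ (n - 1 - j) *
        (1 - p + p * (1 - p) ^ (n - 1 - j)) ^ m) (D j) 1 := by
    intro j _
    have hu : HasDerivAt (fun z : ℝ => (Nat.choose (n - 1) j : ℝ) * z ^ j)
        ((Nat.choose (n - 1) j : ℝ) * ((j : ℝ) * 1 ^ (j - 1))) 1 :=
      (hasDerivAt_pow j 1).const_mul _
    have hv0 : HasDerivAt (fun z : ℝ => 1 - z) (-1) 1 := (hasDerivAt_id 1).const_sub 1
    have hv : HasDerivAt (fun z : ℝ => (1 - z) ^ (n - 1 - j))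
        (((n - 1 - j : ℕ) : ℝ) * (1 - 1) ^ (n - 1 - j - 1) * (-1)) 1 := hv0.pow _
    have h := ((hu.fun_mul hv).mul_const ((1 - p + p * (1 - p) ^ (n - 1 - j)) ^ m))
    refine h.congr_deriv ?_
    simp only [hD, one_pow, show (1 - 1 : ℝ) = 0 from by norm_num]
    ring
  have hs := HasDerivAt.fun_sum key
  have hsum : ∑ j ∈ Finset.range n, D j = (n - 1 : ℝ) * (1 - (1 - p ^ 2) ^ m) := by
    rcases Nat.exists_eq_add_of_le hn with ⟨k, rfl⟩
    rcases k with _ | N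
    · simp [hD]
    · have h1 : 1 + (N + 1) = N + 2 := by ring
      rw [h1]
      rw [Finset.sum_range_succ, Finset.sum_range_succ]
      have hz : ∀ j ∈ Finset.range N, D j = 0 := by
        intro j hj
        have hj' : j < N := Finset.mem_range.mp hj
        have e1 : N + 2 - 1 - j - 1 = N - j := by omega
        have e2 : N + 2 - 1 - j ≠ 0 := by omega
        have e3 : N - j ≠ 0 := by omega
        simp only [hD, h1, e1, zero_pow e2, zero_pow e3]
        ring
      rw [Finset.sum_eq_zero hz, zero_add]
      have eA : N + 2 - 1 - N = 1 := by omega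
      have eB : N + 2 - 1 - N - 1 = 0 := by omega
      have eC : N + 2 - 1 - (N + 1) = 0 := by omega
      have eD : N + 2 - 1 - (N + 1) - 1 = 0 := by omega
      have eE : N + 2 - 1 = N + 1 := by omega
      have eA' : N + 1 - N = 1 := by omega
      have eB' : N + 1 - N - 1 = 0 := by omega
      have eC' : N + 1 - (N + 1) = 0 := by omega
      have eD' : N + 1 - (N + 1) - 1 = 0 := by omega
      simp only [hD, h1, eA, eB, eC, eD, eE, eA', eB', eC', eD', pow_zero, pow_one,
        Nat.choose_succ_self_right, Nat.choose_self, Nat.cast_one, Nat.cast_zero,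
        Nat.cast_add, mul_zero, mul_one, one_mul, zero_mul]
      have hpq : (1 - p + p : ℝ) = 1 := by ring
      rw [hpq]
      norm_num
      ring
  rw [← hsum]
  exact hs
end

section
/- For fixed β, γ > 0, the second factorial moment (n-1)(n-2)[1 - 2(1-p²)^m + (1-p²(2-p))^m] with m = ⌊βn⌋ and p = γ/n converges, as n → ∞, to μ² + μγ where μ = βγ²; hence the second moment of RIG(⌊βn⌋, n, γ/n) converges to μ(1 + μ + γ). -/
open Filter
set_option maxHeartbeats 1000000

private lemma bern (x : ℝ) (h : x ≤ 2) (m : ℕ) : 1 - m*x ≤ (1-x)^m := by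
  have h2 := one_add_mul_le_pow (a := -x) (by linarith) m
  calc 1 - m*x = 1 + m*(-x) := by ring
  _ ≤ (1 + -x)^m := h2
  _ = (1-x)^m := by ring_nf

private lemma quad_ub (x : ℝ) (h0 : 0 ≤ x) (h1 : x ≤ 1) : ∀ m : ℕ, (1-x)^m ≤ 1 - m*x + (m:ℝ)^2*x^2/2 := by
  intro m
  induction m with
  | zero => simp
  | succ k ih =>
    have hx : (0:ℝ) ≤ 1 - x := by linarith
    have h3 : (1-x)^k * (1-x) ≤ (1 - k*x + (k:ℝ)^2*x^2/2) * (1-x) :=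
      mul_le_mul_of_nonneg_right ih hx
    have h4 : (1-x)^(k+1) = (1-x)^k * (1-x) := by ring
    rw [h4]
    push_cast
    nlinarith [sq_nonneg ((k:ℝ)*x), mul_nonneg (mul_nonneg (mul_nonneg (Nat.cast_nonneg k : (0:ℝ) ≤ k) (Nat.cast_nonneg k : (0:ℝ) ≤ k)) h0) (mul_nonneg h0 h0)]

private lemma pow_sub_pow_le' (x y : ℝ) (h0 : 0 ≤ y) (hxy : y ≤ x) (hx : x ≤ 1) : ∀ m:ℕ, x^m - y^m ≤ m*(x-y) := by
  intro m
  induction m with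
  | zero => simp
  | succ k ih =>
    have hxnn : (0:ℝ) ≤ x := le_trans h0 hxy
    have hyx : y^k ≤ x^k := pow_le_pow_left₀ h0 hxy k
    have hyk : y^k ≤ 1 := pow_le_one₀ h0 (le_trans hxy hx)
    have hyk0 : 0 ≤ y^k := pow_nonneg h0 k
    have h5 : x^(k+1) - y^(k+1) = x*(x^k - y^k) + (x-y)*y^k := by ring
    push_cast
    nlinarith [mul_le_mul_of_nonneg_left ih hxnn]

private lemma pow_add_ge (y d : ℝ) (h0 : 0 ≤ y) (hd : 0 ≤ d) : ∀ k:ℕ, y^(k+1) + (k+1:ℝ)*y^k*d ≤ (y+d)^(k+1) := by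
  intro k
  induction k with
  | zero => simp
  | succ k ih =>
    have h1 : (y+d)^(k+1+1) = (y+d)^(k+1) * (y+d) := by ring
    have h2 : 0 ≤ y + d := by linarith
    have h3 : (y^(k+1) + (k+1:ℝ)*y^k*d) * (y+d) ≤ (y+d)^(k+1) * (y+d) :=
      mul_le_mul_of_nonneg_right ih h2
    have hyk0 : 0 ≤ y^k := pow_nonneg h0 k
    have hyk1 : 0 ≤ y^(k+1) := pow_nonneg h0 (k+1)
    have h4 : (y^(k+1)+((k:ℝ)+1)*y^k*d)*(y+d) - (y^(k+1+1) + ((k:ℝ)+1+1)*y^(k+1)*d) = ((k:ℝ)+1)*y^k*d^2 := by ring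
    have h5 : (0:ℝ) ≤ ((k:ℝ)+1)*y^k*d^2 := by positivity
    rw [h1]
    push_cast
    linarith

private lemma floor_div_tendsto (β : ℝ) (hβ : 0 < β) :
    Tendsto (fun n : ℕ => (⌊β * n⌋₊ : ℝ) / n) atTop (nhds β) := by
  apply tendsto_of_tendsto_of_tendsto_of_le_of_le' (g := fun n:ℕ => β - 1/(n:ℝ)) (h := fun _ => β)
  · have h := tendsto_one_div_atTop_nhds_zero_nat (𝕜 := ℝ)
    simpa using (tendsto_const_nhds (x := β)).sub h
  · exact tendsto_const_nhds
  · filter_upwards [eventually_gt_atTop 0] with n hn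
    have hn' : (0:ℝ) < n := by exact_mod_cast hn
    have h := Nat.sub_one_lt_floor (β * n)
    rw [le_div_iff₀ hn']
    have : (β - 1/n) * n = β * n - 1 := by field_simp
    rw [this]; linarith
  · filter_upwards [eventually_gt_atTop 0] with n hn
    have hn' : (0:ℝ) < n := by exact_mod_cast hn
    rw [div_le_iff₀ hn']
    exact Nat.floor_le (by positivity)


private lemma partA (β γ : ℝ) (hβ : 0 < β) (hγ : 0 < γ) :
    Tendsto (fun n : ℕ => (n:ℝ) * (1 - (1 - (γ/n)^2)^⌊β*n⌋₊)) atTop (nhds (β*γ^2)) := by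
  have hr := floor_div_tendsto β hβ
  have h1n : Tendsto (fun n:ℕ => 1/(n:ℝ)) atTop (nhds 0) := tendsto_one_div_atTop_nhds_zero_nat
  have hU : Tendsto (fun n:ℕ => ((⌊β*n⌋₊:ℝ)/n) * γ^2) atTop (nhds (β*γ^2)) := hr.mul_const _
  have hL : Tendsto (fun n:ℕ => ((⌊β*n⌋₊:ℝ)/n) * γ^2 - ((⌊β*n⌋₊:ℝ)/n)^2 * (γ^4/2) * (1/n))
      atTop (nhds (β*γ^2)) := by
    have h2 := ((hr.pow 2).mul_const (γ^4/2)).mul h1n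
    simpa using hU.sub h2
  apply tendsto_of_tendsto_of_tendsto_of_le_of_le' hL hU
  · filter_upwards [eventually_gt_atTop 0, eventually_ge_atTop ⌈γ⌉₊] with n hn hgn
    have hn' : (0:ℝ) < n := by exact_mod_cast hn
    have hγn : γ / n ≤ 1 := by
      rw [div_le_one hn']
      calc γ ≤ (⌈γ⌉₊:ℝ) := Nat.le_ceil γ
      _ ≤ n := by exact_mod_cast hgn
    have hq0 : 0 ≤ γ/n := by positivity
    set m := ⌊β*n⌋₊
    have hx0 : (0:ℝ) ≤ (γ/n)^2 := by positivity
    have hx1 : (γ/n)^2 ≤ 1 := pow_le_one₀ hq0 hγn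
    have h3 := quad_ub ((γ/n)^2) hx0 hx1 m
    have h4 : (m:ℝ)*(γ/n)^2 - (m:ℝ)^2*((γ/n)^2)^2/2 ≤ 1 - (1-(γ/n)^2)^m := by linarith
    have h5 : (n:ℝ)*((m:ℝ)*(γ/n)^2 - (m:ℝ)^2*((γ/n)^2)^2/2) ≤ (n:ℝ)*(1 - (1-(γ/n)^2)^m) :=
      mul_le_mul_of_nonneg_left h4 hn'.le
    have h6 : ((m:ℝ)/n) * γ^2 - ((m:ℝ)/n)^2 * (γ^4/2) * (1/n)
        = (n:ℝ)*((m:ℝ)*(γ/n)^2 - (m:ℝ)^2*((γ/n)^2)^2/2) := by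
      field_simp
    rw [h6]; exact h5
  · filter_upwards [eventually_gt_atTop 0, eventually_ge_atTop ⌈γ⌉₊] with n hn hgn
    have hn' : (0:ℝ) < n := by exact_mod_cast hn
    have hγn : γ / n ≤ 1 := by
      rw [div_le_one hn']
      calc γ ≤ (⌈γ⌉₊:ℝ) := Nat.le_ceil γ
      _ ≤ n := by exact_mod_cast hgn
    have hq0 : 0 ≤ γ/n := by positivity
    set m := ⌊β*n⌋₊
    have h3 := bern ((γ/n)^2) (by nlinarith) m
    have h4 : 1 - (1-(γ/n)^2)^m ≤ (m:ℝ)*(γ/n)^2 := by linarith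
    have h5 : (n:ℝ)*(1 - (1-(γ/n)^2)^m) ≤ (n:ℝ)*((m:ℝ)*(γ/n)^2) :=
      mul_le_mul_of_nonneg_left h4 hn'.le
    have h6 : (n:ℝ)*((m:ℝ)*(γ/n)^2) = ((m:ℝ)/n) * γ^2 := by field_simp
    rw [← h6]; exact h5


private lemma partB (β γ : ℝ) (hβ : 0 < β) (hγ : 0 < γ) :
    Tendsto (fun n : ℕ => ((n:ℝ)-1)*((n:ℝ)-2)*
      ((1-2*(γ/n)^2+(γ/n)^3)^⌊β*n⌋₊ - (1-2*(γ/n)^2+(γ/n)^4)^⌊β*n⌋₊))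
      atTop (nhds (β*γ^3)) := by
  have hr := floor_div_tendsto β hβ
  have h1n : Tendsto (fun n:ℕ => 1/(n:ℝ)) atTop (nhds 0) := tendsto_one_div_atTop_nhds_zero_nat
  have e1 : Tendsto (fun n:ℕ => ((n:ℝ)-1)/n) atTop (nhds 1) := by
    have h := (tendsto_const_nhds (x := (1:ℝ))).sub h1n
    rw [sub_zero] at h
    apply h.congr'
    filter_upwards [eventually_gt_atTop 0] with n hn
    have hn' : (0:ℝ) < n := by exact_mod_cast hn
    field_simp
  have e2 : Tendsto (fun n:ℕ => ((n:ℝ)-2)/n) atTop (nhds 1) := by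
    have h := (tendsto_const_nhds (x := (1:ℝ))).sub (h1n.const_mul 2)
    rw [mul_zero, sub_zero] at h
    apply h.congr'
    filter_upwards [eventually_gt_atTop 0] with n hn
    have hn' : (0:ℝ) < n := by exact_mod_cast hn
    field_simp
  have hU : Tendsto (fun n:ℕ => (((n:ℝ)-1)/n) * (((n:ℝ)-2)/n) * ((⌊β*n⌋₊:ℝ)/n) * (γ^3 - γ^4*(1/n)))
      atTop (nhds (β*γ^3)) := by
    have h := ((e1.mul e2).mul hr).mul
      ((tendsto_const_nhds (x := γ^3)).sub (h1n.const_mul (γ^4)))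
    have e : β*γ^3 = 1*1*β*(γ^3 - γ^4*0) := by ring
    rw [e]; exact h
  have hW : Tendsto (fun n:ℕ => ((⌊β*n⌋₊:ℝ)/n) * (2*γ^2*(1/n) - γ^4*(1/n)^3)) atTop (nhds 0) := by
    have h := hr.mul (((h1n.const_mul (2*γ^2)).sub ((h1n.pow 3).const_mul (γ^4))))
    have e : (0:ℝ) = β*(2*γ^2*0 - γ^4*0^3) := by ring
    rw [e]; exact h
  have hL : Tendsto (fun n:ℕ =>
      ((((n:ℝ)-1)/n) * (((n:ℝ)-2)/n) * ((⌊β*n⌋₊:ℝ)/n) * (γ^3 - γ^4*(1/n))) *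
      (1 - ((⌊β*n⌋₊:ℝ)/n) * (2*γ^2*(1/n) - γ^4*(1/n)^3))) atTop (nhds (β*γ^3)) := by
    have h := hU.mul ((tendsto_const_nhds (x := (1:ℝ))).sub hW)
    have e : β*γ^3 = β*γ^3*(1-0) := by ring
    rw [e]; exact h
  apply tendsto_of_tendsto_of_tendsto_of_le_of_le' hL hU
  · -- lower bound
    filter_upwards [eventually_ge_atTop 2, eventually_ge_atTop ⌈2*γ⌉₊,
      eventually_ge_atTop ⌈1/β⌉₊, eventually_gt_atTop 0] with n hn2 hgn hbn hn0
    have hn' : (0:ℝ) < n := by exact_mod_cast hn0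
    have hq2 : γ/n ≤ 1/2 := by
      rw [div_le_div_iff₀ hn' (by norm_num)]
      have : 2*γ ≤ (⌈2*γ⌉₊:ℝ) := Nat.le_ceil _
      have h2 : ((⌈2*γ⌉₊:ℕ):ℝ) ≤ n := by exact_mod_cast hgn
      linarith
    have hq0 : 0 < γ/n := by positivity
    have hm1 : 1 ≤ ⌊β*n⌋₊ := by
      apply Nat.le_floor
      have h1 : (1/β : ℝ) ≤ ⌈1/β⌉₊ := Nat.le_ceil _
      have h2 : ((⌈1/β⌉₊:ℕ):ℝ) ≤ n := by exact_mod_cast hbn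
      have : 1/β ≤ (n:ℝ) := le_trans h1 h2
      rw [div_le_iff₀ hβ] at this
      push_cast
      linarith [mul_comm β (n:ℝ)]
    set m := ⌊β*n⌋₊ with hmdef
    set q := γ/(n:ℝ) with hqdef
    set x := 1-2*q^2+q^3 with hxdef
    set y := 1-2*q^2+q^4 with hydef
    have hy0 : 0 ≤ y := by rw [hydef]; nlinarith [pow_nonneg hq0.le 4]
    have hq1 : q ≤ 1 := by linarith
    have hy1 : y ≤ 1 := by
      have h24 : q^4 ≤ q^2 := pow_le_pow_of_le_one hq0.le hq1 (by norm_num)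
      rw [hydef]; nlinarith [sq_nonneg q]
    have hd : 0 ≤ x - y := by
      rw [hxdef, hydef]
      have := mul_nonneg (pow_nonneg hq0.le 3) (by linarith : (0:ℝ) ≤ 1 - q)
      nlinarith
    obtain ⟨k, hk⟩ : ∃ k, m = k + 1 := ⟨m - 1, (Nat.succ_pred_eq_of_pos hm1).symm⟩
    have hpa := pow_add_ge y (x-y) hy0 hd k
    have hxy : y + (x - y) = x := by ring
    rw [hxy] at hpa
    have hcast : ((k:ℝ)+1) = (m:ℝ) := by rw [hk]; push_cast; ring
    have hstep1 : (m:ℝ) * y^k * (x-y) ≤ x^m - y^m := by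
      rw [hk]; push_cast; rw [hcast] at hpa; rw [hk] at hpa; push_cast at hpa ⊢; linarith
    have hbern : 1 - (m:ℝ)*(1-y) ≤ y^k := by
      have h := one_add_mul_le_pow (a := y-1) (by linarith) k
      have h2 : (1 + (y-1))^k = y^k := by ring_nf
      rw [h2] at h
      have hkm : (k:ℝ) ≤ (m:ℝ) := by rw [hk]; push_cast; linarith
      nlinarith
    have hmd : 0 ≤ (m:ℝ) * (x-y) := mul_nonneg (Nat.cast_nonneg m) hd
    have hstep2 : (m:ℝ) * (x-y) * (1 - (m:ℝ)*(1-y)) ≤ x^m - y^m := by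
      calc (m:ℝ) * (x-y) * (1 - (m:ℝ)*(1-y)) ≤ (m:ℝ) * (x-y) * y^k :=
            mul_le_mul_of_nonneg_left hbern hmd
      _ = (m:ℝ) * y^k * (x-y) := by ring
      _ ≤ x^m - y^m := hstep1
    have hc : (0:ℝ) ≤ ((n:ℝ)-1)*((n:ℝ)-2) := by
      have : (2:ℝ) ≤ n := by exact_mod_cast hn2
      nlinarith
    have hstep3 := mul_le_mul_of_nonneg_left hstep2 hc
    have hid : (((n:ℝ)-1)/n) * (((n:ℝ)-2)/n) * ((m:ℝ)/n) * (γ^3 - γ^4*(1/n)) *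
        (1 - ((m:ℝ)/n) * (2*γ^2*(1/n) - γ^4*(1/n)^3))
        = ((n:ℝ)-1)*((n:ℝ)-2) * ((m:ℝ) * (x-y) * (1 - (m:ℝ)*(1-y))) := by
      rw [hxdef, hydef, hqdef]
      ring
    rw [hid]
    exact hstep3
  · -- upper bound
    filter_upwards [eventually_ge_atTop 2, eventually_ge_atTop ⌈2*γ⌉₊, eventually_gt_atTop 0]
      with n hn2 hgn hn0
    have hn' : (0:ℝ) < n := by exact_mod_cast hn0
    have hq2 : γ/n ≤ 1/2 := by
      rw [div_le_div_iff₀ hn' (by norm_num)]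
      have : 2*γ ≤ (⌈2*γ⌉₊:ℝ) := Nat.le_ceil _
      have h2 : ((⌈2*γ⌉₊:ℕ):ℝ) ≤ n := by exact_mod_cast hgn
      linarith
    have hq0 : 0 < γ/n := by positivity
    set m := ⌊β*n⌋₊ with hmdef
    set q := γ/(n:ℝ) with hqdef
    set x := 1-2*q^2+q^3 with hxdef
    set y := 1-2*q^2+q^4 with hydef
    have hy0 : 0 ≤ y := by rw [hydef]; nlinarith [pow_nonneg hq0.le 4]
    have hd : y ≤ x := by
      rw [hxdef, hydef]
      have := mul_nonneg (pow_nonneg hq0.le 3) (by linarith : (0:ℝ) ≤ 1 - q)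
      nlinarith
    have hx1 : x ≤ 1 := by rw [hxdef]; nlinarith [sq_nonneg q]
    have hps := pow_sub_pow_le' x y hy0 hd hx1 m
    have hc : (0:ℝ) ≤ ((n:ℝ)-1)*((n:ℝ)-2) := by
      have : (2:ℝ) ≤ n := by exact_mod_cast hn2
      nlinarith
    have hstep := mul_le_mul_of_nonneg_left hps hc
    have hid : (((n:ℝ)-1)/n) * (((n:ℝ)-2)/n) * ((m:ℝ)/n) * (γ^3 - γ^4*(1/n))
        = ((n:ℝ)-1)*((n:ℝ)-2) * ((m:ℝ) * (x-y)) := by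
      rw [hxdef, hydef, hqdef]
      ring
    rw [hid]
    exact hstep


theorem rig_second_factorial_moment_tendsto (β γ : ℝ) (hβ : 0 < β) (hγ : 0 < γ) :
    Tendsto (fun n : ℕ =>
        ((n : ℝ) - 1) * ((n : ℝ) - 2) *
          (1 - 2 * (1 - (γ / n) ^ 2) ^ ⌊β * n⌋₊ +
            (1 - (γ / n) ^ 2 * (2 - γ / n)) ^ ⌊β * n⌋₊))
      atTop (nhds ((β * γ ^ 2) ^ 2 + (β * γ ^ 2) * γ)) := by
  have h1n : Tendsto (fun n:ℕ => 1/(n:ℝ)) atTop (nhds 0) := tendsto_one_div_atTop_nhds_zero_nat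
  have e1 : Tendsto (fun n:ℕ => ((n:ℝ)-1)/n) atTop (nhds 1) := by
    have h := (tendsto_const_nhds (x := (1:ℝ))).sub h1n
    rw [sub_zero] at h
    apply h.congr'
    filter_upwards [eventually_gt_atTop 0] with n hn
    have hn' : (0:ℝ) < n := by exact_mod_cast hn
    field_simp
  have e2 : Tendsto (fun n:ℕ => ((n:ℝ)-2)/n) atTop (nhds 1) := by
    have h := (tendsto_const_nhds (x := (1:ℝ))).sub (h1n.const_mul 2)
    rw [mul_zero, sub_zero] at h
    apply h.congr'
    filter_upwards [eventually_gt_atTop 0] with n hn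
    have hn' : (0:ℝ) < n := by exact_mod_cast hn
    field_simp
  have hRatio : Tendsto (fun n:ℕ => ((n:ℝ)-1)*((n:ℝ)-2)/(n:ℝ)^2) atTop (nhds 1) := by
    have h := e1.mul e2
    rw [mul_one] at h
    apply h.congr'
    filter_upwards [eventually_gt_atTop 0] with n hn
    have hn' : (0:ℝ) < n := by exact_mod_cast hn
    rw [div_mul_div_comm]
    congr 1
    ring
  have hA := partA β γ hβ hγ
  have hB := partB β γ hβ hγ
  have hG : Tendsto (fun n:ℕ =>
      (((n:ℝ)-1)*((n:ℝ)-2)/(n:ℝ)^2) * ((n:ℝ) * (1 - (1-(γ/n)^2)^⌊β*n⌋₊))^2 +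
      ((n:ℝ)-1)*((n:ℝ)-2)*((1-2*(γ/n)^2+(γ/n)^3)^⌊β*n⌋₊ - (1-2*(γ/n)^2+(γ/n)^4)^⌊β*n⌋₊))
      atTop (nhds ((β*γ^2)^2 + (β*γ^2)*γ)) := by
    have h := (hRatio.mul (hA.pow 2)).add hB
    have e : (β*γ^2)^2 + (β*γ^2)*γ = 1*(β*γ^2)^2 + β*γ^3 := by ring
    rw [e]; exact h
  apply hG.congr'
  filter_upwards [eventually_gt_atTop 0] with n hn
  have hn' : (0:ℝ) < n := by exact_mod_cast hn
  set m := ⌊β*n⌋₊ with hmdef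
  have hA2 : ((1-(γ/n)^2)^m)^2 = (1-2*(γ/n)^2+(γ/n)^4)^m := by
    rw [← pow_mul, mul_comm, pow_mul]
    congr 1
    ring
  have hB2 : (1-(γ/n)^2*(2-γ/n))^m = (1-2*(γ/n)^2+(γ/n)^3)^m := by
    congr 1
    ring
  rw [← hA2, ← hB2]
  have hkey : (((n:ℝ)-1)*((n:ℝ)-2)/(n:ℝ)^2) * ((n:ℝ) * (1 - (1-(γ/n)^2)^m))^2
      = ((n:ℝ)-1)*((n:ℝ)-2) * (1 - (1-(γ/n)^2)^m)^2 := by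
    field_simp
  rw [hkey]
  ring
end

section
/- Let n', n'' : ℕ → ℕ satisfy ⌊βn⌋ ≥ n'(n), n'(n)/n → β, n ≥ n''(n), n''(n)/n → 1. Then for each fixed z ∈ [0,1], the generating function of RIG(n', n'', γ/n), namely ∑_{j=0}^{n''-1} C(n''-1,j) z^j (1-z)^{n''-1-j} [1 - γ/n + (γ/n)(1-γ/n)^{n''-1-j}]^{n'}, converges as n → ∞ to exp(βγ(exp(γ(z-1)) - 1)). -/
open Filter Finset

-- swap lemma
lemma rig_swap_sum (m N : ℕ) (z p c : ℝ) :
    ∑ j ∈ range (m+1), (m.choose j : ℝ) * z^j * (1-z)^(m-j) * ((1-p) + p * c^(m-j))^N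
    = ∑ i ∈ range (N+1), (N.choose i : ℝ) * p^i * (1-p)^(N-i) * (z + (1-z)*c^i)^m := by
  have L : ∀ j, ((1-p) + p * c^(m-j))^N
      = ∑ i ∈ range (N+1), (p * c^(m-j))^i * (1-p)^(N-i) * (N.choose i : ℝ) := by
    intro j; rw [add_comm, add_pow]
  have R : ∀ i : ℕ, (z + (1-z)*(c:ℝ)^i)^m
      = ∑ j ∈ range (m+1), z^j * ((1-z)*c^i)^(m-j) * (m.choose j : ℝ) := by
    intro i; rw [add_pow]
  calc ∑ j ∈ range (m+1), (m.choose j : ℝ) * z^j * (1-z)^(m-j) * ((1-p) + p * c^(m-j))^N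
      = ∑ j ∈ range (m+1), ∑ i ∈ range (N+1),
          (m.choose j : ℝ) * z^j * (1-z)^(m-j) * ((p * c^(m-j))^i * (1-p)^(N-i) * (N.choose i : ℝ)) := by
        refine Finset.sum_congr rfl fun j _ => ?_
        rw [L j, Finset.mul_sum]
    _ = ∑ i ∈ range (N+1), ∑ j ∈ range (m+1),
          (m.choose j : ℝ) * z^j * (1-z)^(m-j) * ((p * c^(m-j))^i * (1-p)^(N-i) * (N.choose i : ℝ)) :=
        Finset.sum_comm
    _ = ∑ i ∈ range (N+1), (N.choose i : ℝ) * p^i * (1-p)^(N-i) * (z + (1-z)*c^i)^m := by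
        refine Finset.sum_congr rfl fun i _ => ?_
        rw [R i, Finset.mul_sum]
        refine Finset.sum_congr rfl fun j _ => ?_
        rw [mul_pow, mul_pow, ← pow_mul, ← pow_mul, Nat.mul_comm]
        ring

noncomputable def rigR (x : ℝ) : ℝ := if x = 0 then 1 else Real.log (1+x) / x

lemma rigR_tendsto : Tendsto rigR (nhds 0) (nhds 1) := by
  have hd : HasDerivAt (fun x : ℝ => Real.log (1+x)) 1 0 := by
    simpa using ((hasDerivAt_id (0:ℝ)).const_add 1).log (by norm_num)
  have h1 : Tendsto rigR (nhdsWithin 0 {(0:ℝ)}ᶜ) (nhds 1) := by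
    have := hasDerivAt_iff_tendsto_slope.mp hd
    refine this.congr' ?_
    filter_upwards [self_mem_nhdsWithin] with x hx
    have hx0 : x ≠ 0 := hx
    simp [slope_fun_def, rigR, hx0, div_eq_inv_mul]
  have h2 : Tendsto rigR (pure (0:ℝ)) (nhds 1) := by
    have := tendsto_pure_nhds rigR (0:ℝ)
    simpa [rigR] using this
  rw [← nhdsNE_sup_pure 0]
  exact tendsto_sup.mpr ⟨h1, h2⟩

lemma rig_log_identity (x : ℝ) : Real.log (1+x) = x * rigR x := by
  by_cases hx : x = 0
  · simp [hx, rigR]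
  · simp [rigR, hx]; field_simp

-- a n ^ b n → exp (c * t)
lemma rig_pow_tendsto (a : ℕ → ℝ) (b : ℕ → ℕ) (c t : ℝ)
    (hb : Tendsto (fun n => (b n : ℝ)/n) atTop (nhds c))
    (ha : Tendsto (fun n : ℕ => (n:ℝ) * (a n - 1)) atTop (nhds t))
    (hpos : ∀ᶠ n in atTop, 0 < a n) :
    Tendsto (fun n => a n ^ b n) atTop (nhds (Real.exp (c*t))) := by
  have ha0 : Tendsto (fun n => a n - 1) atTop (nhds 0) := by
    have h := ha.mul (tendsto_inv_atTop_nhds_zero_nat (𝕜 := ℝ))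
    rw [mul_zero] at h
    refine h.congr' ?_
    filter_upwards [eventually_ge_atTop 1] with n hn
    have : (n:ℝ) ≠ 0 := by positivity
    field_simp
  have hlog : Tendsto (fun n : ℕ => (n:ℝ) * Real.log (a n)) atTop (nhds t) := by
    have := ha.mul (rigR_tendsto.comp ha0)
    rw [mul_one] at this
    refine this.congr ?_
    intro n
    have : Real.log (a n) = (a n - 1) * rigR (a n - 1) := by
      have := rig_log_identity (a n - 1); simpa using this
    simp [Function.comp, this]; ring
  have hblog : Tendsto (fun n => (b n : ℝ) * Real.log (a n)) atTop (nhds (c * t)) := by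
    have := hb.mul hlog
    refine this.congr' ?_
    filter_upwards [eventually_ge_atTop 1] with n hn
    have hn0 : (n:ℝ) ≠ 0 := by positivity
    field_simp
  have := (Real.continuous_exp.tendsto _).comp hblog
  refine this.congr' ?_
  filter_upwards [hpos] with n hn
  simp [Function.comp, Real.exp_nat_mul, Real.exp_log hn]

lemma rig_gdivn (γ : ℝ) : Tendsto (fun n : ℕ => γ / n) atTop (nhds 0) :=
  tendsto_const_div_atTop_nhds_zero_nat γ

lemma rig_base_tendsto (γ : ℝ) : Tendsto (fun n : ℕ => 1 - γ / n) atTop (nhds 1) := by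
  have := (tendsto_const_nhds (α := ℕ) (x := (1:ℝ))).sub (rig_gdivn γ)
  simpa using this

lemma rig_nmul (γ : ℝ) : Tendsto (fun n : ℕ => (n:ℝ) * (1 - γ/n - 1)) atTop (nhds (-γ)) := by
  refine tendsto_const_nhds.congr' ?_
  filter_upwards [eventually_ge_atTop 1] with n hn
  have hn0 : (n:ℝ) ≠ 0 := by positivity
  field_simp; ring

lemma rig_npow (γ : ℝ) (i : ℕ) :
    Tendsto (fun n : ℕ => (n:ℝ) * ((1 - γ/n)^i - 1)) atTop (nhds (-(γ * i))) := by
  induction i with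
  | zero => simpa using tendsto_const_nhds
  | succ i ih =>
    have h := (ih.mul (rig_base_tendsto γ)).add (rig_nmul γ)
    have heq : ∀ n : ℕ, (n:ℝ) * ((1 - γ/n)^i - 1) * (1 - γ/n) + (n:ℝ) * (1 - γ/n - 1)
        = (n:ℝ) * ((1 - γ/n)^(i+1) - 1) := by intro n; ring
    have := h.congr heq
    convert this using 2
    push_cast; ring

lemma rig_n'_top (β : ℝ) (hβ : 0 < β) (n' : ℕ → ℕ)
    (hn'β : Tendsto (fun n : ℕ => (n' n : ℝ) / n) atTop (nhds β)) :
    Tendsto (fun n : ℕ => (n' n : ℝ)) atTop atTop := by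
  have h := Filter.Tendsto.pos_mul_atTop hβ hn'β (tendsto_natCast_atTop_atTop (R := ℝ))
  refine h.congr' ?_
  filter_upwards [eventually_ge_atTop 1] with n hn
  have hn0 : (n:ℝ) ≠ 0 := by positivity
  field_simp

lemma rig_choose_pow (β γ : ℝ) (hβ : 0 < β) (n' : ℕ → ℕ)
    (hn'β : Tendsto (fun n : ℕ => (n' n : ℝ) / n) atTop (nhds β)) (i : ℕ) :
    Tendsto (fun n : ℕ => ((n' n).choose i : ℝ) * (γ / n)^i) atTop
      (nhds ((β*γ)^i / i.factorial)) := by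
  induction i with
  | zero => simpa using tendsto_const_nhds
  | succ i ih =>
    have hni : ∀ᶠ n : ℕ in atTop, (i:ℝ) ≤ (n' n : ℝ) :=
      (rig_n'_top β hβ n' hn'β).eventually_ge_atTop _
    have hfac : Tendsto (fun n : ℕ => ((n' n : ℝ) - i) * (γ / n)) atTop (nhds (β*γ)) := by
      have h1 : Tendsto (fun n : ℕ => (n' n : ℝ)/n * γ - i * (γ/n)) atTop
          (nhds (β * γ - 0)) := by
        have := (hn'β.mul_const γ).sub ((tendsto_const_nhds (x := (i:ℝ))).mul (rig_gdivn γ))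
        simpa using this
      rw [sub_zero] at h1
      refine h1.congr' ?_
      filter_upwards [eventually_ge_atTop 1] with n hn
      have hn0 : (n:ℝ) ≠ 0 := by positivity
      field_simp
    have h := (ih.mul hfac).div_const ((i:ℝ)+1)
    have hlim : (β*γ)^i / i.factorial * (β*γ) / ((i:ℝ)+1) = (β*γ)^(i+1) / (i+1).factorial := by
      rw [Nat.factorial_succ]; push_cast; field_simp; ring
    rw [hlim] at h
    refine h.congr' ?_
    filter_upwards [hni, eventually_ge_atTop 1] with n hn hn1
    have hin : i ≤ n' n := by exact_mod_cast hn
    have hc := Nat.choose_succ_right_eq (n' n) i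
    have hcR : ((n' n).choose (i+1) : ℝ) * (i+1) = ((n' n).choose i : ℝ) * ((n' n : ℝ) - i) := by
      have := congrArg (Nat.cast (R := ℝ)) hc
      push_cast [Nat.cast_sub hin] at this
      simpa using this
    have hi1 : ((i:ℝ)+1) ≠ 0 := by positivity
    have hch : ((n' n).choose (i+1) : ℝ) = ((n' n).choose i : ℝ) * ((n' n:ℝ) - i) / ((i:ℝ)+1) := by
      field_simp
      linarith [hcR]
    rw [hch]; ring


lemma rig_exp_tsum (x : ℝ) : ∑' n : ℕ, x^n / n.factorial = Real.exp x := by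
  rw [Real.exp_eq_exp_ℝ, NormedSpace.exp_eq_tsum_div]

theorem rig_pgf_tendsto_cpoisson (β γ : ℝ) (hβ : 0 < β) (hγ : 0 < γ)
    (n' n'' : ℕ → ℕ)
    (hn' : ∀ n, n' n ≤ ⌊β * (n : ℝ)⌋₊)
    (hn'β : Tendsto (fun n : ℕ => (n' n : ℝ) / n) atTop (nhds β))
    (hn'' : ∀ n, n'' n ≤ n)
    (hn''1 : Tendsto (fun n : ℕ => (n'' n : ℝ) / n) atTop (nhds 1))
    (z : ℝ) (hz0 : 0 ≤ z) (hz1 : z ≤ 1) :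
    Tendsto (fun n : ℕ =>
        ∑ j ∈ Finset.range (n'' n),
          (Nat.choose (n'' n - 1) j : ℝ) * z ^ j * (1 - z) ^ (n'' n - 1 - j) *
            (1 - γ / n + (γ / n) * (1 - γ / n) ^ (n'' n - 1 - j)) ^ (n' n))
      atTop (nhds (Real.exp (β * γ * (Real.exp (γ * (z - 1)) - 1)))) := by
  set F : ℕ → ℕ → ℝ := fun n i =>
    if i ≤ n' n ∧ γ ≤ (n:ℝ) ∧ 1 ≤ n'' n then
      ((n' n).choose i : ℝ) * (γ/n)^i * (1 - γ/n)^(n' n - i) *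
        (z + (1-z)*(1 - γ/n)^i)^(n'' n - 1)
    else 0 with hF
  set L : ℕ → ℝ := fun i =>
    (β*γ)^i / i.factorial * Real.exp (-(β*γ)) * Real.exp (γ*(z-1)*i) with hL
  have hevγ : ∀ᶠ n : ℕ in atTop, γ + 1 ≤ (n:ℝ) :=
    (tendsto_natCast_atTop_atTop (R := ℝ)).eventually_ge_atTop (γ+1)
  have hev'' : ∀ᶠ n : ℕ in atTop, 1 ≤ n'' n := by
    have h2 : ∀ᶠ n : ℕ in atTop, (1:ℝ)/2 ≤ (n'' n : ℝ)/n :=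
      hn''1.eventually (eventually_ge_nhds (by norm_num))
    filter_upwards [h2, eventually_ge_atTop 1] with n hn hn1
    by_contra h
    have h0 : n'' n = 0 := by omega
    rw [h0] at hn
    norm_num at hn
  -- pointwise convergence
  have hab : ∀ i : ℕ, Tendsto (fun n => F n i) atTop (nhds (L i)) := by
    intro i
    have T1 := rig_choose_pow β γ hβ n' hn'β i
    have hevi : ∀ᶠ n : ℕ in atTop, (i:ℝ) ≤ (n' n : ℝ) :=
      (rig_n'_top β hβ n' hn'β).eventually_ge_atTop _
    have T2 : Tendsto (fun n : ℕ => (1 - γ/n)^(n' n - i)) atTop (nhds (Real.exp (β * -γ))) := by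
      apply rig_pow_tendsto
      · have h1 : Tendsto (fun n : ℕ => (n' n : ℝ)/n - i/n) atTop (nhds (β - 0)) :=
          hn'β.sub (tendsto_const_div_atTop_nhds_zero_nat (i:ℝ))
        rw [sub_zero] at h1
        refine h1.congr' ?_
        filter_upwards [hevi, eventually_ge_atTop 1] with n hni hn1
        have hin : i ≤ n' n := by exact_mod_cast hni
        have hn0 : (n:ℝ) ≠ 0 := by positivity
        push_cast [Nat.cast_sub hin]
        ring
      · exact rig_nmul γ
      · filter_upwards [hevγ] with n hn
        have : γ / n < 1 := by
          rw [div_lt_one (by linarith)]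
          linarith
        linarith
    have T3 : Tendsto (fun n : ℕ => (z + (1-z)*(1 - γ/n)^i)^(n'' n - 1)) atTop
        (nhds (Real.exp (1 * ((1-z) * -(γ*i))))) := by
      apply rig_pow_tendsto
      · have h1 : Tendsto (fun n : ℕ => (n'' n : ℝ)/n - 1/n) atTop (nhds (1 - 0)) :=
          hn''1.sub (tendsto_const_div_atTop_nhds_zero_nat 1)
        rw [sub_zero] at h1
        refine h1.congr' ?_
        filter_upwards [hev'', eventually_ge_atTop 1] with n hn'' hn1
        have hn0 : (n:ℝ) ≠ 0 := by positivity
        push_cast [Nat.cast_sub hn'']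
        ring
      · have h1 : Tendsto (fun n : ℕ => (1-z) * ((n:ℝ) * ((1 - γ/n)^i - 1))) atTop
            (nhds ((1-z) * -(γ*i))) := tendsto_const_nhds.mul (rig_npow γ i)
        refine h1.congr fun n => by ring
      · filter_upwards [hevγ] with n hn
        have hc0 : 0 < 1 - γ / n := by
          have : γ / n < 1 := by
            rw [div_lt_one (by linarith)]
            linarith
          linarith
        have hc1 : 1 - γ / n ≤ 1 := by
          have hn0 : (0:ℝ) < n := by linarith
          have : 0 ≤ γ / n := by positivity
          linarith
        have hp1 : (1 - γ/n)^i ≤ 1 := pow_le_one₀ (le_of_lt hc0) hc1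
        have hp0 : 0 < (1 - γ/n)^i := pow_pos hc0 i
        nlinarith
    have hval : (β*γ)^i / i.factorial * Real.exp (β * -γ) * Real.exp (1 * ((1-z) * -(γ*i)))
        = L i := by
      rw [show β * -γ = -(β*γ) by ring, show (1:ℝ) * ((1-z) * -(γ*(i:ℝ))) = γ*(z-1)*i by ring]
    have h := (T1.mul T2).mul T3
    rw [hval] at h
    refine h.congr' ?_
    filter_upwards [hevi, hevγ, hev''] with n hni hnγ hn''
    have hin : i ≤ n' n := by exact_mod_cast hni
    simp only [hF]
    rw [if_pos ⟨hin, by linarith, hn''⟩]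
  -- bound
  have h_bound : ∀ᶠ n : ℕ in atTop, ∀ i, ‖F n i‖ ≤ (β*γ)^i / i.factorial := by
    refine Eventually.of_forall fun n i => ?_
    simp only [hF]
    by_cases h : i ≤ n' n ∧ γ ≤ (n:ℝ) ∧ 1 ≤ n'' n
    · simp only [if_pos h]
      obtain ⟨hin, hγn, hn''1'⟩ := h
      have hn0 : (0:ℝ) < n := lt_of_lt_of_le hγ hγn
      have hp0 : 0 ≤ γ / n := by positivity
      have hp1 : γ / n ≤ 1 := by rw [div_le_one hn0]; exact hγn
      have hc0 : 0 ≤ 1 - γ/n := by linarith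
      have hc1 : 1 - γ/n ≤ 1 := by linarith
      have hci0 : 0 ≤ (1 - γ/n)^i := pow_nonneg hc0 i
      have hci1 : (1 - γ/n)^i ≤ 1 := pow_le_one₀ hc0 hc1
      have hb0 : 0 ≤ z + (1-z)*(1 - γ/n)^i := by nlinarith
      have hb1 : z + (1-z)*(1 - γ/n)^i ≤ 1 := by nlinarith
      have hd1 : (1 - γ/n)^(n' n - i) ≤ 1 := pow_le_one₀ hc0 hc1
      have hd1' : 0 ≤ (1 - γ/n)^(n' n - i) := pow_nonneg hc0 _
      have hd2 : (z + (1-z)*(1 - γ/n)^i)^(n'' n - 1) ≤ 1 := pow_le_one₀ hb0 hb1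
      have hd2' : 0 ≤ (z + (1-z)*(1 - γ/n)^i)^(n'' n - 1) := pow_nonneg hb0 _
      have hcp0 : (0:ℝ) ≤ ((n' n).choose i : ℝ) * (γ/n)^i := by positivity
      have hnorm : ‖((n' n).choose i : ℝ) * (γ/n)^i * (1 - γ/n)^(n' n - i) *
          (z + (1-z)*(1 - γ/n)^i)^(n'' n - 1)‖ = ((n' n).choose i : ℝ) * (γ/n)^i * (1 - γ/n)^(n' n - i) *
          (z + (1-z)*(1 - γ/n)^i)^(n'' n - 1) := by
        rw [Real.norm_eq_abs, abs_of_nonneg]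
        exact mul_nonneg (mul_nonneg hcp0 hd1') hd2'
      rw [hnorm]
      have hn'le : (n' n : ℝ) ≤ β * n := by
        calc (n' n : ℝ) ≤ (⌊β * (n:ℝ)⌋₊ : ℝ) := by exact_mod_cast hn' n
          _ ≤ β * n := Nat.floor_le (by positivity)
      have hkey : ((n' n).choose i : ℝ) * (γ/n)^i ≤ (β*γ)^i / i.factorial := by
        calc ((n' n).choose i : ℝ) * (γ/n)^i
            ≤ ((n' n : ℝ)^i / i.factorial) * (γ/n)^i := by
              apply mul_le_mul_of_nonneg_right (Nat.choose_le_pow_div i (n' n)) (pow_nonneg hp0 i)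
          _ = ((n' n : ℝ) * (γ/n))^i / i.factorial := by rw [mul_pow]; ring
          _ ≤ (β*γ)^i / i.factorial := by
              have hbase : (n' n : ℝ) * (γ/n) ≤ β*γ := by
                calc (n' n : ℝ) * (γ/n) ≤ (β*n) * (γ/n) :=
                      mul_le_mul_of_nonneg_right hn'le hp0
                  _ = β*γ := by field_simp
              have hbase0 : (0:ℝ) ≤ (n' n : ℝ) * (γ/n) := by positivity
              gcongr
      calc ((n' n).choose i : ℝ) * (γ/n)^i * (1 - γ/n)^(n' n - i) *
          (z + (1-z)*(1 - γ/n)^i)^(n'' n - 1)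
          ≤ ((n' n).choose i : ℝ) * (γ/n)^i * (1 - γ/n)^(n' n - i) * 1 :=
            mul_le_mul_of_nonneg_left hd2 (mul_nonneg hcp0 hd1')
        _ = ((n' n).choose i : ℝ) * (γ/n)^i * (1 - γ/n)^(n' n - i) := mul_one _
        _ ≤ ((n' n).choose i : ℝ) * (γ/n)^i * 1 := mul_le_mul_of_nonneg_left hd1 hcp0
        _ = ((n' n).choose i : ℝ) * (γ/n)^i := mul_one _
        _ ≤ (β*γ)^i / i.factorial := hkey
    · simp only [if_neg h, norm_zero]
      positivity
  have h_sum : Summable (fun i : ℕ => (β*γ)^i / i.factorial) := Real.summable_pow_div_factorial _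
  have hT := tendsto_tsum_of_dominated_convergence h_sum hab h_bound
  have hLsum : ∑' i, L i = Real.exp (β * γ * (Real.exp (γ * (z - 1)) - 1)) := by
    have hx : ∀ i : ℕ, L i = Real.exp (-(β*γ)) * ((β*γ*Real.exp (γ*(z-1)))^i / i.factorial) := by
      intro i
      simp only [hL]
      rw [mul_pow, show γ*(z-1)*(i:ℝ) = (i:ℕ)*(γ*(z-1)) by push_cast; ring, Real.exp_nat_mul]
      ring
    rw [tsum_congr hx, tsum_mul_left, rig_exp_tsum, ← Real.exp_add]
    congr 1
    ring
  rw [hLsum] at hT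
  refine hT.congr' ?_
  filter_upwards [hevγ, hev''] with n hnγ hn''1'
  have hswap := rig_swap_sum (n'' n - 1) (n' n) z (γ/n) (1 - γ/n)
  have hm1 : n'' n - 1 + 1 = n'' n := by omega
  rw [hm1] at hswap
  have htsum : ∑' i, F n i = ∑ i ∈ range (n' n + 1), F n i := by
    apply tsum_eq_sum
    intro i hi
    simp only [mem_range, not_lt] at hi
    simp only [hF]
    exact if_neg (by rintro ⟨h1, -, -⟩; omega)
  have hcongr : ∑ i ∈ range (n' n + 1), F n i = ∑ i ∈ range (n' n + 1),
      ((n' n).choose i : ℝ) * (γ/n)^i * (1 - γ/n)^(n' n - i) *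
        (z + (1-z)*(1 - γ/n)^i)^(n'' n - 1) := by
    refine Finset.sum_congr rfl fun i hi => ?_
    simp only [mem_range] at hi
    simp only [hF]
    rw [if_pos ⟨by omega, by linarith, hn''1'⟩]
  rw [htsum, hcongr]
  exact hswap.symm
end
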